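/- arXiv:1509.05239 — 8 statements merged into one kernel-verified Lean document; each statement's English description precedes it below -/
import Mathlib

section
/- For the TRIP-Stern sequence for (e,e,e), the maximal terms lie on the left-most path of the tree: for every n and every word v ∈ {0,1}ⁿ, each of the three entries of Δ(v) is at most the third entry of f₀ⁿ(1,1,1); hence the maximum entry m_n of level n equals the third entry of f₀ⁿ(1,1,1). -/
/-- `f₀(a,b,c) = (b,c,a+c)`, i.e. right multiplication by `A₀` for `(e,e,e)`. -/
def f0 (p : ℤ × ℤ × ℤ) : ℤ × ℤ × ℤ := (p.2.1, p.2.2, p.1 + p.2.2)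

/-- `f₁(a,b,c) = (a,b,a+c)`, i.e. right multiplication by `A₁` for `(e,e,e)`. -/
def f1 (p : ℤ × ℤ × ℤ) : ℤ × ℤ × ℤ := (p.1, p.2.1, p.1 + p.2.2)

/-- One step of the TRIP-Stern tree: apply `f₁` on a `true` and `f₀` on a `false`. -/
def step (p : ℤ × ℤ × ℤ) (i : Bool) : ℤ × ℤ × ℤ := if i then f1 p else f0 p

/-- `Δ(v) = f_{iₙ}(⋯ f_{i₁}(1,1,1) ⋯)`, applying `f_{i₁}` first. -/
def delta (v : List Bool) : ℤ × ℤ × ℤ := v.foldl step (1, 1, 1)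

/-- The maximum coordinate of a triple. -/
def maxEntry (p : ℤ × ℤ × ℤ) : ℤ := max p.1 (max p.2.1 p.2.2)

/-- `m n` is the maximum entry of level `n` of the TRIP-Stern sequence for `(e,e,e)`. -/
noncomputable def m (n : ℕ) : ℤ :=
  Finset.sup' Finset.univ Finset.univ_nonempty
    (fun v : Fin n → Bool => maxEntry (delta (List.ofFn v)))

lemma ordered (n : ℕ) :
    1 ≤ (f0^[n] (1,1,1)).1 ∧ (f0^[n] (1,1,1)).1 ≤ (f0^[n] (1,1,1)).2.1 ∧
      (f0^[n] (1,1,1)).2.1 ≤ (f0^[n] (1,1,1)).2.2 := by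
  induction n with
  | zero => simp
  | succ n ih =>
    rw [Function.iterate_succ_apply']
    obtain ⟨h1, h2, h3⟩ := ih
    refine ⟨by simp [f0, -Prod.mk_one_one]; linarith, by simp [f0, -Prod.mk_one_one]; linarith, by simp [f0, -Prod.mk_one_one]; linarith⟩

lemma dom (v : List Bool) :
    (delta v).1 ≤ (f0^[v.length] (1,1,1)).1 ∧
    (delta v).2.1 ≤ (f0^[v.length] (1,1,1)).2.1 ∧
    (delta v).2.2 ≤ (f0^[v.length] (1,1,1)).2.2 := by
  induction v using List.reverseRecOn with
  | nil => simp [delta]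
  | append_singleton v i ih =>
    obtain ⟨h1, h2, h3⟩ := ih
    obtain ⟨o1, o2, o3⟩ := ordered v.length
    have hd : delta (v ++ [i]) = step (delta v) i := by
      simp [delta, List.foldl_append]
    have hl : v.length + 1 = (v ++ [i]).length := by simp
    rw [← hl, Function.iterate_succ_apply', hd]
    cases i <;> simp [step, f0, f1, -Prod.mk_one_one] <;> refine ⟨by linarith, by linarith, by linarith⟩

lemma foldl_false (n : ℕ) (p : ℤ × ℤ × ℤ) :
    List.foldl step p (List.replicate n false) = f0^[n] p := by
  induction n generalizing p with
  | zero => simp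
  | succ n ih =>
    rw [List.replicate_succ, List.foldl_cons, Function.iterate_succ_apply, ih]
    rfl

/-- For the TRIP-Stern sequence for `(e,e,e)`, the maximal terms lie on the left-most
path of the tree: every entry of every level-`n` triple `Δ(v)` is at most the third
entry of `f₀ⁿ(1,1,1)`, and hence the maximum entry `m n` of level `n` equals the third
entry of `f₀ⁿ(1,1,1)`. -/
theorem maxTerms_leftmost_eee :
    (∀ (n : ℕ) (v : Fin n → Bool),
      (delta (List.ofFn v)).1 ≤ (f0^[n] (1, 1, 1)).2.2 ∧
      (delta (List.ofFn v)).2.1 ≤ (f0^[n] (1, 1, 1)).2.2 ∧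
      (delta (List.ofFn v)).2.2 ≤ (f0^[n] (1, 1, 1)).2.2) ∧
    (∀ n : ℕ, m n = (f0^[n] (1, 1, 1)).2.2) := by
  have key : ∀ (n : ℕ) (v : Fin n → Bool),
      (delta (List.ofFn v)).1 ≤ (f0^[n] (1, 1, 1)).2.2 ∧
      (delta (List.ofFn v)).2.1 ≤ (f0^[n] (1, 1, 1)).2.2 ∧
      (delta (List.ofFn v)).2.2 ≤ (f0^[n] (1, 1, 1)).2.2 := by
    intro n v
    have h := dom (List.ofFn v)
    have o := ordered n
    rw [List.length_ofFn] at h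
    exact ⟨by linarith [h.1, o.2.1, o.2.2], by linarith [h.2.1, o.2.2], h.2.2⟩
  refine ⟨key, fun n => le_antisymm ?_ ?_⟩
  · apply Finset.sup'_le
    intro v _
    obtain ⟨h1, h2, h3⟩ := key n v
    simp [maxEntry, -Prod.mk_one_one]; exact ⟨h1, h2, h3⟩
  · have h := Finset.le_sup' (f := fun v : Fin n → Bool => maxEntry (delta (List.ofFn v)))
      (Finset.mem_univ (fun _ => false))
    refine le_trans ?_ h
    have : List.ofFn (fun _ : Fin n => false) = List.replicate n false := List.ofFn_const n false
    rw [this]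
    unfold delta
    rw [foldl_false]
    obtain ⟨o1, o2, o3⟩ := ordered n
    simp [maxEntry]
end

section
/- For the TRIP-Stern sequence for (e,e,e), the sequence (m_n) of maximum entries of the levels satisfies m_0 = 1, m_1 = 2, m_2 = 3, and the recurrence m_n = m_{n-1} + m_{n-3} for all n ≥ 3. -/
/-- Auxiliary Padovan-like sequence. -/
def t : ℕ → ℤ
  | 0 => 1
  | 1 => 1
  | 2 => 1
  | (n+3) => t (n+2) + t n

lemma t_pos : ∀ n, 0 < t n := by
  intro n
  induction n using Nat.strong_induction_on with
  | _ n ih =>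
    match n with
    | 0 => norm_num [t]
    | 1 => norm_num [t]
    | 2 => norm_num [t]
    | (k+3) =>
      have h1 := ih (k+2) (by omega)
      have h2 := ih k (by omega)
      simp only [t]; linarith

lemma t_mono : ∀ n, t n ≤ t (n+1) := by
  intro n
  match n with
  | 0 => norm_num [t]
  | 1 => norm_num [t]
  | (k+2) =>
    have := t_pos k
    show t (k+2) ≤ t (k+3)
    simp only [t]; linarith

lemma t_mono2 (h : a ≤ b) : t a ≤ t b := by
  induction b with
  | zero => simp_all
  | succ b ih =>
    rcases Nat.lt_or_ge a (b+1) with h' | h'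
    · exact le_trans (ih (by omega)) (t_mono b)
    · have : a = b + 1 := by omega
      subst this; exact le_refl _

lemma delta_append (v : List Bool) (i : Bool) :
    delta (v ++ [i]) = step (delta v) i := by
  simp [delta, List.foldl_append]

lemma delta_bound (v : List Bool) :
    (delta v).1 ≤ t v.length ∧ (delta v).2.1 ≤ t (v.length + 1) ∧
      (delta v).2.2 ≤ t (v.length + 2) := by
  induction v using List.reverseRecOn with
  | nil => norm_num [delta, t]
  | append_singleton v i ih =>
    obtain ⟨h1, h2, h3⟩ := ih
    rw [delta_append]
    have hlen : (v ++ [i]).length = v.length + 1 := by simp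
    rw [hlen]
    cases i <;> simp [step, f0, f1] <;>
      refine ⟨?_, ?_, ?_⟩
    · exact h2
    · exact h3
    · calc (delta v).1 + (delta v).2.2 ≤ t v.length + t (v.length + 2) := by linarith
        _ = t (v.length + 3) := by simp [t]; ring
    · exact le_trans h1 (t_mono _)
    · exact le_trans h2 (t_mono _)
    · calc (delta v).1 + (delta v).2.2 ≤ t v.length + t (v.length + 2) := by linarith
        _ = t (v.length + 3) := by simp [t]; ring

lemma delta_replicate (n : ℕ) :
    delta (List.replicate n false) = (t n, t (n+1), t (n+2)) := by
  induction n with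
  | zero => norm_num [delta, t]
  | succ n ih =>
    rw [List.replicate_succ', delta_append, ih]
    simp [step, f0]
    show t n + t (n+2) = t (n+3)
    simp [t]; ring

lemma m_eq (n : ℕ) : m n = t (n + 2) := by
  apply le_antisymm
  · apply Finset.sup'_le
    intro v _
    obtain ⟨h1, h2, h3⟩ := delta_bound (List.ofFn v)
    simp only [List.length_ofFn] at h1 h2 h3
    refine max_le (le_trans h1 (t_mono2 (by omega)))
      (max_le (le_trans h2 (t_mono2 (by omega))) h3)
  · have := Finset.le_sup' (f := fun v : Fin n → Bool => maxEntry (delta (List.ofFn v)))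
      (Finset.mem_univ (fun _ => false))
    refine le_trans ?_ this
    have : List.ofFn (fun _ : Fin n => false) = List.replicate n false := by
      simp [List.ofFn_const]
    rw [this, delta_replicate]
    have ha := t_mono2 (show n ≤ n + 2 by omega)
    have hb := t_mono2 (show n + 1 ≤ n + 2 by omega)
    simp [maxEntry]

/-- For the TRIP-Stern sequence for `(e,e,e)`, the sequence of maximum entries of the
levels satisfies `m 0 = 1`, `m 1 = 2`, `m 2 = 3`, and `m n = m (n-1) + m (n-3)` for all
`n ≥ 3`. -/
theorem maxTerms_recurrence_eee :
    m 0 = 1 ∧ m 1 = 2 ∧ m 2 = 3 ∧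
    (∀ n : ℕ, 3 ≤ n → m n = m (n - 1) + m (n - 3)) := by
  refine ⟨by norm_num [m_eq, t], by norm_num [m_eq, t], by norm_num [m_eq, t], ?_⟩
  intro n hn
  obtain ⟨k, rfl⟩ : ∃ k, n = k + 3 := ⟨n - 3, by omega⟩
  have e1 : k + 3 - 1 = k + 2 := by omega
  have e3 : k + 3 - 3 = k := by omega
  rw [e1, e3, m_eq, m_eq, m_eq]
  show t (k + 5) = t (k + 4) + t (k + 2)
  simp [show k + 5 = (k+2) + 3 by omega, t]
end

section
/- For the TRIP-Stern sequence for (e,e,e), the minimal terms lie on the right-most path of the tree and all have value 1: for every n, every entry of every triple Δ(v) with v ∈ {0,1}ⁿ is at least 1, and the right-most triple satisfies f₁ⁿ(1,1,1) = (1,1,n+1), so the minimum entry of level n equals 1. -/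
/-- The minimum coordinate of a triple. -/
def minEntry (p : ℤ × ℤ × ℤ) : ℤ := min p.1 (min p.2.1 p.2.2)

lemma pos_foldl (v : List Bool) : ∀ p : ℤ × ℤ × ℤ,
    1 ≤ p.1 → 1 ≤ p.2.1 → 1 ≤ p.2.2 →
    1 ≤ (v.foldl step p).1 ∧ 1 ≤ (v.foldl step p).2.1 ∧ 1 ≤ (v.foldl step p).2.2 := by
  induction v with
  | nil => intro p h1 h2 h3; exact ⟨h1, h2, h3⟩
  | cons i t ih =>
    intro p h1 h2 h3
    simp only [List.foldl_cons]
    cases i <;> simp only [step, f0, f1, if_true, if_false] <;>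
      exact ih _ (by simpa) (by simpa) (by simp; omega)

lemma iter_f1 (n : ℕ) : f1^[n] (1, 1, 1) = ((1 : ℤ), (1 : ℤ), (n : ℤ) + 1) := by
  induction n with
  | zero => simp
  | succ k ih =>
    rw [Function.iterate_succ_apply', ih]
    simp [f1]; ring

lemma foldl_replicate (n : ℕ) (p : ℤ × ℤ × ℤ) :
    (List.replicate n true).foldl step p = f1^[n] p := by
  induction n generalizing p with
  | zero => simp
  | succ k ih =>
    rw [List.replicate_succ, List.foldl_cons, Function.iterate_succ_apply, ih]
    rfl

/-- For the TRIP-Stern sequence for `(e,e,e)`, the minimal terms lie on the right-most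
path and all have value `1`: every entry of every level-`n` triple `Δ(v)` is at least
`1`, the right-most triple is `f₁ⁿ(1,1,1) = (1,1,n+1)`, and the minimum entry of each
level equals `1`. -/
theorem minTerms_rightmost_eee :
    (∀ (n : ℕ) (v : Fin n → Bool),
      1 ≤ (delta (List.ofFn v)).1 ∧
      1 ≤ (delta (List.ofFn v)).2.1 ∧
      1 ≤ (delta (List.ofFn v)).2.2) ∧
    (∀ n : ℕ, f1^[n] (1, 1, 1) = ((1 : ℤ), (1 : ℤ), (n : ℤ) + 1)) ∧
    (∀ n : ℕ,
      Finset.inf' Finset.univ Finset.univ_nonempty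
        (fun v : Fin n → Bool => minEntry (delta (List.ofFn v))) = 1) := by
  refine ⟨fun n v => pos_foldl _ _ le_rfl le_rfl le_rfl, iter_f1, fun n => ?_⟩
  apply le_antisymm
  · have h := Finset.inf'_le (f := fun v : Fin n → Bool => minEntry (delta (List.ofFn v)))
      (b := fun _ : Fin n => true) (Finset.mem_univ _)
    refine h.trans ?_
    have : List.ofFn (fun _ : Fin n => true) = List.replicate n true := List.ofFn_const n true
    rw [show delta (List.ofFn fun _ : Fin n => true) = ((1:ℤ),(1:ℤ),(n:ℤ)+1) by
      rw [delta, this, foldl_replicate, iter_f1]]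
    simp [minEntry]
  · rw [Finset.le_inf'_iff]
    intro v _
    obtain ⟨h1, h2, h3⟩ := pos_foldl (List.ofFn v) (1,1,1) le_rfl le_rfl le_rfl
    simp [minEntry, delta] at *
    exact ⟨h1, h2, h3⟩
end

section
/- For the TRIP-Stern sequence for (e,e,e), let α be the real number satisfying α³ − 4α² + 5α − 4 = 0 (the unique real zero of x³ − 4x² + 5x − 4). Then, as n → ∞, S_i(n)/S_i(n−1) → α for each i ∈ {1,2,3}, and S(n)/S(n−1) → α, where the ratios are taken in ℝ. -/
open Filter Topology

/-- `S₁ n` is the sum of the first coordinates of the level-`n` triples. -/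
def S1 (n : ℕ) : ℤ := ∑ v : Fin n → Bool, (delta (List.ofFn v)).1

/-- `S₂ n` is the sum of the second coordinates of the level-`n` triples. -/
def S2 (n : ℕ) : ℤ := ∑ v : Fin n → Bool, (delta (List.ofFn v)).2.1

/-- `S₃ n` is the sum of the third coordinates of the level-`n` triples. -/
def S3 (n : ℕ) : ℤ := ∑ v : Fin n → Bool, (delta (List.ofFn v)).2.2

/-- `S n = S₁ n + S₂ n + S₃ n` is the sum of all entries of level `n`. -/
def S (n : ℕ) : ℤ := S1 n + S2 n + S3 n

lemma sum_succ (g : ℤ × ℤ × ℤ → ℤ) (n : ℕ) :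
    ∑ v : Fin (n+1) → Bool, g (delta (List.ofFn v))
    = ∑ v : Fin n → Bool, (g (f0 (delta (List.ofFn v))) + g (f1 (delta (List.ofFn v)))) := by
  rw [← Fintype.sum_equiv (Fin.snocEquiv (fun _ => Bool))
      (fun p => g (delta (List.ofFn (Fin.snocEquiv _ p))))
      (fun v => g (delta (List.ofFn v))) (fun p => rfl)]
  rw [Fintype.sum_prod_type_right]
  refine Finset.sum_congr rfl fun v _ => ?_
  have h : ∀ b : Bool, List.ofFn (Fin.snocEquiv (fun _ => Bool) (b, v)) =
      (List.ofFn v).concat b := by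
    intro b
    rw [List.ofFn_succ']
    simp [Fin.snocEquiv]
  rw [Fintype.sum_bool]
  simp only [h, delta, List.foldl_concat]
  simp [step, add_comm]

lemma hS1 (n : ℕ) : S1 (n+1) = S1 n + S2 n := by
  rw [S1, sum_succ, S1, S2, ← Finset.sum_add_distrib]
  exact Finset.sum_congr rfl fun v _ => by simp [f0, f1]; ring

lemma hS2 (n : ℕ) : S2 (n+1) = S2 n + S3 n := by
  rw [S2, sum_succ (fun p => p.2.1), S2, S3, ← Finset.sum_add_distrib]
  exact Finset.sum_congr rfl fun v _ => by simp [f0, f1]; ring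

lemma hS3 (n : ℕ) : S3 (n+1) = 2 * S1 n + 2 * S3 n := by
  rw [S3, sum_succ (fun p => p.2.2), S1, S3, Finset.mul_sum, Finset.mul_sum, ← Finset.sum_add_distrib]
  exact Finset.sum_congr rfl fun v _ => by simp [f0, f1]; ring

lemma S1_zero : S1 0 = 1 := rfl
lemma S2_zero : S2 0 = 1 := rfl
lemma S3_zero : S3 0 = 1 := rfl

lemma Spos (n : ℕ) : 0 < S1 n ∧ 0 < S2 n ∧ 0 < S3 n := by
  induction n with
  | zero => exact ⟨one_pos, one_pos, one_pos⟩
  | succ n ih =>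
    obtain ⟨h1, h2, h3⟩ := ih
    refine ⟨?_, ?_, ?_⟩
    · rw [hS1]; linarith
    · rw [hS2]; linarith
    · rw [hS3]; linarith

lemma S1_rec (n : ℕ) : S1 (n+3) = 4 * S1 (n+2) - 5 * S1 (n+1) + 4 * S1 n := by
  have a1 := hS1 n; have a2 := hS1 (n+1); have a3 := hS1 (n+2)
  have b1 := hS2 n; have b2 := hS2 (n+1)
  have c1 := hS3 n
  linarith

lemma S2_rec (n : ℕ) : S2 (n+3) = 4 * S2 (n+2) - 5 * S2 (n+1) + 4 * S2 n := by
  have a1 := hS1 n; have a2 := hS1 (n+1)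
  have b1 := hS2 n; have b2 := hS2 (n+1); have b3 := hS2 (n+2)
  have c1 := hS3 n; have c2 := hS3 (n+1)
  linarith

lemma S3_rec (n : ℕ) : S3 (n+3) = 4 * S3 (n+2) - 5 * S3 (n+1) + 4 * S3 n := by
  have a1 := hS1 n; have a2 := hS1 (n+1)
  have b1 := hS2 n; have b2 := hS2 (n+1)
  have c1 := hS3 n; have c2 := hS3 (n+1); have c3 := hS3 (n+2)
  linarith

lemma alpha_gt_two {α : ℝ} (hα : α ^ 3 - 4 * α ^ 2 + 5 * α - 4 = 0) : 2 < α := by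
  by_contra h
  push_neg at h
  nlinarith [sq_nonneg (α - 1)]

lemma ratio_tendsto {α : ℝ} (hα : α ^ 3 - 4 * α ^ 2 + 5 * α - 4 = 0) (s : ℕ → ℝ)
    (hpos : ∀ n, 0 < s n)
    (hrec : ∀ n, s (n+3) = 4 * s (n+2) - 5 * s (n+1) + 4 * s n)
    (hu : 0 < s 2 - (4 - α) * s 1 + (4 / α) * s 0) :
    Tendsto (fun n : ℕ => s (n+1) / s n) atTop (𝓝 α) := by
  have h2 : 2 < α := alpha_gt_two hα
  have hα0 : (0:ℝ) < α := by linarith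
  have hαne : α ≠ 0 := ne_of_gt hα0
  obtain ⟨u0, hu0def⟩ : ∃ u0 : ℝ, u0 = s 2 - (4 - α) * s 1 + (4 / α) * s 0 := ⟨_, rfl⟩
  rw [← hu0def] at hu
  have hkey : 4 / α = α ^ 2 - 4 * α + 5 := by
    field_simp
    nlinarith [hα]
  have hgeo : ∀ n, s (n+2) - (4 - α) * s (n+1) + (4 / α) * s n = u0 * α ^ n := by
    intro n
    induction n with
    | zero => simp [hu0def]
    | succ n ih =>
      have hr := hrec n
      have hstep : s (n+3) - (4 - α) * s (n+2) + 4 / α * s (n+1)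
          = α * (s (n+2) - (4 - α) * s (n+1) + 4 / α * s n) := by
        rw [hr, hkey]
        linear_combination (- s n) * hα
      rw [hstep, ih, pow_succ]
      ring
  obtain ⟨r, hrdef⟩ : ∃ r : ℕ → ℝ, r = fun n => s n / α ^ n := ⟨_, rfl⟩
  have hrpos : ∀ n, 0 < r n := by
    intro n; rw [hrdef]; exact div_pos (hpos n) (pow_pos hα0 n)
  obtain ⟨p, hpdef⟩ : ∃ p : ℝ, p = (4 - α) / α := ⟨_, rfl⟩
  obtain ⟨q, hqdef⟩ : ∃ q : ℝ, q = 4 / α ^ 3 := ⟨_, rfl⟩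
  obtain ⟨c, hcdef⟩ : ∃ c : ℝ, c = u0 / α ^ 2 := ⟨_, rfl⟩
  have hq0 : 0 < q := by rw [hqdef]; positivity
  have hq1 : q < 1 := by
    rw [hqdef, div_lt_one (by positivity)]
    nlinarith
  have hrrec : ∀ n, r (n+2) = p * r (n+1) - q * r n + c := by
    intro n
    have hg := hgeo n
    have hs2 : s (n+2) = (4 - α) * s (n+1) - (4 / α) * s n + u0 * α ^ n := by linarith
    rw [hrdef, hpdef, hqdef, hcdef]
    simp only
    rw [hs2]
    field_simp
    ring
  have hden : 0 < 1 - p + q := by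
    have he : 1 - p + q = (2 * α ^ 3 - 4 * α ^ 2 + 4) / α ^ 3 := by
      rw [hpdef, hqdef]; field_simp; ring
    rw [he]
    apply div_pos _ (by positivity)
    nlinarith
  obtain ⟨rstar, hrstardef⟩ : ∃ x : ℝ, x = c / (1 - p + q) := ⟨_, rfl⟩
  have hrstar_fix : rstar = p * rstar - q * rstar + c := by
    rw [hrstardef]
    field_simp
    ring
  have hrstar_pos : 0 < rstar := by
    rw [hrstardef]
    apply div_pos _ hden
    rw [hcdef]; positivity
  obtain ⟨w, hwdef⟩ : ∃ w : ℕ → ℝ, w = fun n => r n - rstar := ⟨_, rfl⟩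
  have hwrec : ∀ n, w (n+2) = p * w (n+1) - q * w n := by
    intro n
    simp only [hwdef]
    rw [hrrec n]
    nlinarith [hrstar_fix]
  obtain ⟨E, hEdef⟩ : ∃ E : ℕ → ℝ,
      E = fun n => w (n+1) ^ 2 - p * w (n+1) * w n + q * w n ^ 2 := ⟨_, rfl⟩
  have hE : ∀ n, E n = q ^ n * E 0 := by
    intro n
    induction n with
    | zero => simp
    | succ n ih =>
      have hq : E (n+1) = q * E n := by
        simp only [hEdef]
        rw [hwrec n]
        ring
      rw [hq, ih, pow_succ]; ring
  have hdisc : p ^ 2 < 4 * q := by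
    have hmul : p ^ 2 * α ^ 3 < 4 * q * α ^ 3 := by
      have e1 : p ^ 2 * α ^ 3 = (4 - α) ^ 2 * α := by rw [hpdef]; field_simp
      have e2 : 4 * q * α ^ 3 = 16 := by rw [hqdef]; field_simp; norm_num
      rw [e1, e2]
      nlinarith [hα, sq_nonneg (8 * α - 11)]
    exact lt_of_mul_lt_mul_right hmul (by positivity)
  obtain ⟨k, hkdef⟩ : ∃ k : ℝ, k = q - p ^ 2 / 4 := ⟨_, rfl⟩
  have hk : 0 < k := by rw [hkdef]; linarith
  have hElb : ∀ n, k * w n ^ 2 ≤ E n := by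
    intro n
    simp only [hEdef, hkdef]
    nlinarith [sq_nonneg (w (n+1) - p / 2 * w n)]
  have hE0 : 0 ≤ E 0 := le_trans (by positivity) (hElb 0)
  have hw2 : Tendsto (fun n => w n ^ 2) atTop (𝓝 0) := by
    have hb : Tendsto (fun n : ℕ => q ^ n * (E 0 / k)) atTop (𝓝 0) := by
      simpa using (tendsto_pow_atTop_nhds_zero_of_lt_one (le_of_lt hq0) hq1).mul_const (E 0 / k)
    refine squeeze_zero (fun n => sq_nonneg _) (fun n => ?_) hb
    have h := hElb n
    rw [hE n] at h
    rw [← mul_div_assoc, le_div_iff₀ hk, mul_comm]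
    exact h
  have hwabs : Tendsto (fun n => |w n|) atTop (𝓝 0) := by
    have hs : Tendsto (fun n => Real.sqrt (w n ^ 2)) atTop (𝓝 (Real.sqrt 0)) :=
      (Real.continuous_sqrt.tendsto 0).comp hw2
    simpa [Real.sqrt_sq_eq_abs] using hs
  have hw0 : Tendsto w atTop (𝓝 0) := tendsto_zero_iff_abs_tendsto_zero w |>.mpr hwabs
  have hr_lim : Tendsto r atTop (𝓝 rstar) := by
    have h := hw0.add_const rstar
    rw [hwdef] at h
    simpa using h
  have hr_lim' : Tendsto (fun n => r (n+1)) atTop (𝓝 rstar) :=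
    hr_lim.comp (tendsto_add_atTop_nat 1)
  have hratio : Tendsto (fun n => r (n+1) / r n) atTop (𝓝 1) := by
    have h := hr_lim'.div hr_lim (ne_of_gt hrstar_pos)
    rw [div_self (ne_of_gt hrstar_pos)] at h; exact h
  have heq : ∀ n, s (n+1) / s n = α * (r (n+1) / r n) := by
    intro n
    rw [hrdef]
    simp only
    have h1 : s n ≠ 0 := (hpos n).ne'
    have hp2 : (α : ℝ) ^ n ≠ 0 := pow_ne_zero _ hαne
    field_simp [pow_succ]
    ring
  have hfin : Tendsto (fun n => α * (r (n+1) / r n)) atTop (𝓝 (α * 1)) :=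
    hratio.const_mul α
  simp only [mul_one] at hfin
  have hfun : (fun n : ℕ => s (n+1) / s n) = fun n => α * (r (n+1) / r n) := funext heq
  rw [hfun]
  exact hfin

lemma S_rec (n : ℕ) : S (n+3) = 4 * S (n+2) - 5 * S (n+1) + 4 * S n := by
  have := S1_rec n; have := S2_rec n; have := S3_rec n
  simp only [S]; linarith

lemma S1_one : S1 1 = 2 := by rw [hS1, S1_zero, S2_zero]; norm_num
lemma S2_one : S2 1 = 2 := by rw [hS2, S2_zero, S3_zero]; norm_num
lemma S3_one : S3 1 = 4 := by rw [hS3, S1_zero, S3_zero]; norm_num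
lemma S1_two : S1 2 = 4 := by rw [hS1, S1_one, S2_one]; norm_num
lemma S2_two : S2 2 = 6 := by rw [hS2, S2_one, S3_one]; norm_num
lemma S3_two : S3 2 = 12 := by rw [hS3, S1_one, S3_one]; norm_num

lemma S_zero : S 0 = 3 := by simp [S, S1_zero, S2_zero, S3_zero]
lemma S_one : S 1 = 8 := by simp [S, S1_one, S2_one, S3_one]
lemma S_two : S 2 = 22 := by simp [S, S1_two, S2_two, S3_two]
lemma S_pos (n : ℕ) : 0 < S n := by
  have h := Spos n
  simp only [S]; linarith [h.1, h.2.1, h.2.2]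


/-- For the TRIP-Stern sequence for `(e,e,e)`, if `α` is the real zero of
`x³ − 4x² + 5x − 4`, then `Sᵢ(n)/Sᵢ(n−1) → α` for `i = 1, 2, 3` and
`S(n)/S(n−1) → α` as `n → ∞`. -/
theorem levelSum_ratio_tendsto_eee (α : ℝ)
    (hα : α ^ 3 - 4 * α ^ 2 + 5 * α - 4 = 0) :
    Tendsto (fun n : ℕ => (S1 (n + 1) : ℝ) / (S1 n : ℝ)) atTop (𝓝 α) ∧
    Tendsto (fun n : ℕ => (S2 (n + 1) : ℝ) / (S2 n : ℝ)) atTop (𝓝 α) ∧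
    Tendsto (fun n : ℕ => (S3 (n + 1) : ℝ) / (S3 n : ℝ)) atTop (𝓝 α) ∧
    Tendsto (fun n : ℕ => (S (n + 1) : ℝ) / (S n : ℝ)) atTop (𝓝 α) := by
  have h2 : 2 < α := alpha_gt_two hα
  have hα0 : (0:ℝ) < α := by linarith
  have h4α : 0 < 4 / α := by positivity
  refine ⟨?_, ?_, ?_, ?_⟩
  · refine ratio_tendsto hα (fun n => (S1 n : ℝ)) ?_ ?_ ?_
    · intro n; show (0:ℝ) < (S1 n : ℝ); exact_mod_cast (Spos n).1
    · intro n
      show (S1 (n+3) : ℝ) = 4 * (S1 (n+2) : ℝ) - 5 * (S1 (n+1) : ℝ) + 4 * (S1 n : ℝ)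
      exact_mod_cast S1_rec n
    · show (0:ℝ) < (S1 2 : ℝ) - (4 - α) * (S1 1 : ℝ) + 4 / α * (S1 0 : ℝ)
      rw [S1_zero, S1_one, S1_two]; push_cast; linarith
  · refine ratio_tendsto hα (fun n => (S2 n : ℝ)) ?_ ?_ ?_
    · intro n; show (0:ℝ) < (S2 n : ℝ); exact_mod_cast (Spos n).2.1
    · intro n
      show (S2 (n+3) : ℝ) = 4 * (S2 (n+2) : ℝ) - 5 * (S2 (n+1) : ℝ) + 4 * (S2 n : ℝ)
      exact_mod_cast S2_rec n
    · show (0:ℝ) < (S2 2 : ℝ) - (4 - α) * (S2 1 : ℝ) + 4 / α * (S2 0 : ℝ)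
      rw [S2_zero, S2_one, S2_two]; push_cast; linarith
  · refine ratio_tendsto hα (fun n => (S3 n : ℝ)) ?_ ?_ ?_
    · intro n; show (0:ℝ) < (S3 n : ℝ); exact_mod_cast (Spos n).2.2
    · intro n
      show (S3 (n+3) : ℝ) = 4 * (S3 (n+2) : ℝ) - 5 * (S3 (n+1) : ℝ) + 4 * (S3 n : ℝ)
      exact_mod_cast S3_rec n
    · show (0:ℝ) < (S3 2 : ℝ) - (4 - α) * (S3 1 : ℝ) + 4 / α * (S3 0 : ℝ)
      rw [S3_zero, S3_one, S3_two]; push_cast; linarith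
  · refine ratio_tendsto hα (fun n => (S n : ℝ)) ?_ ?_ ?_
    · intro n; show (0:ℝ) < (S n : ℝ); exact_mod_cast S_pos n
    · intro n
      show (S (n+3) : ℝ) = 4 * (S (n+2) : ℝ) - 5 * (S (n+1) : ℝ) + 4 * (S n : ℝ)
      exact_mod_cast S_rec n
    · show (0:ℝ) < (S 2 : ℝ) - (4 - α) * (S 1 : ℝ) + 4 / α * (S 0 : ℝ)
      rw [S_zero, S_one, S_two]; push_cast; linarith
end

section
/- Every term of the TRIP-Stern sequence for (e,e,e) lies in P: for every nonempty word v = (i₁,…,iₙ) ∈ {0,1}ⁿ with n ≥ 1, the triple Δ(v) = (a,b,c) satisfies 0 < a ≤ b < c. -/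
def Q (p : ℤ × ℤ × ℤ) : Prop := 0 < p.1 ∧ p.1 ≤ p.2.1 ∧ p.2.1 < p.2.2

lemma step_Q {p : ℤ × ℤ × ℤ} (h : Q p) (i : Bool) : Q (step p i) := by
  obtain ⟨h1, h2, h3⟩ := h
  cases i <;> simp [step, f0, f1, Q] <;> constructor <;> omega

lemma foldl_Q {p : ℤ × ℤ × ℤ} (h : Q p) (v : List Bool) : Q (v.foldl step p) := by
  induction v generalizing p with
  | nil => exact h
  | cons i t ih => exact ih (step_Q h i)

/-- Every term of the TRIP-Stern sequence for `(e,e,e)` coming from a nonempty word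
`v` satisfies `0 < a ≤ b < c`, where `Δ(v) = (a,b,c)`; hence it lies in the set `P`
of potential entries. -/
theorem tripStern_mem_P (v : List Bool) (hv : v ≠ []) :
    0 < (delta v).1 ∧ (delta v).1 ≤ (delta v).2.1 ∧ (delta v).2.1 < (delta v).2.2 := by
  obtain ⟨i, t, rfl⟩ := List.exists_cons_of_ne_nil hv
  have : Q (delta (i :: t)) := by
    have h0 : Q (step (1,1,1) i) := by cases i <;> simp [step, f0, f1, Q]
    simpa [delta] using foldl_Q h0 t
  exact this
end

section
/- If (a,b,c) ∈ P and (a,b,c) ≠ (1,1,2), then at most one of the triples (a,b,c)·A₁⁻¹ = (a,b,c−a) and (a,b,c)·A₀⁻¹ = (c−b,a,b) lies in P; that is, it is not the case that both (a,b,c−a) ∈ P and (c−b,a,b) ∈ P. -/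
/-- The set `P` of potential entries:
`P = {(a,b,c) ∈ ℤ³ : 0 < a ≤ b < c} ∪ {(1,1,1)}`. -/
def P : Set (ℤ × ℤ × ℤ) :=
  {p | 0 < p.1 ∧ p.1 ≤ p.2.1 ∧ p.2.1 < p.2.2} ∪ {(1, 1, 1)}

/-- If `(a,b,c) ∈ P` and `(a,b,c) ≠ (1,1,2)`, then at most one of
`(a,b,c)·A₁⁻¹ = (a,b,c−a)` and `(a,b,c)·A₀⁻¹ = (c−b,a,b)` lies in `P`. -/
theorem not_both_preimages_in_P (a b c : ℤ)
    (h : ((a, b, c) : ℤ × ℤ × ℤ) ∈ P)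
    (hne : ((a, b, c) : ℤ × ℤ × ℤ) ≠ (1, 1, 2)) :
    ¬(((a, b, c - a) : ℤ × ℤ × ℤ) ∈ P ∧ ((c - b, a, b) : ℤ × ℤ × ℤ) ∈ P) := by
  simp only [P, Set.mem_union, Set.mem_setOf_eq, Set.mem_singleton_iff, Prod.mk.injEq,
    Prod.ext_iff, Prod.ext_iff] at h hne ⊢
  rw [ne_eq, Prod.mk.injEq, Prod.mk.injEq] at hne
  rintro ⟨h1, h2⟩
  rcases h with h | h <;> rcases h1 with h1 | h1 <;> rcases h2 with h2 | h2 <;> omega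
end

section
/- Define G : ℤ³ → ℤ³ by G(a,b,c) = (a,b,c−a) if a + b < c, and G(a,b,c) = (c−b,a,b) otherwise. Then for every X = (a,b,c) ∈ P, one has G(X·A₀) = X and G(X·A₁) = X; explicitly, G(b,c,a+c) = (a,b,c) and G(a,b,a+c) = (a,b,c). -/
/-- The inverse map `G`: `G(a,b,c) = (a,b,c−a)` if `a + b < c`,
and `G(a,b,c) = (c−b,a,b)` otherwise. -/
def G (p : ℤ × ℤ × ℤ) : ℤ × ℤ × ℤ :=
  if p.1 + p.2.1 < p.2.2 then (p.1, p.2.1, p.2.2 - p.1)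
  else (p.2.2 - p.2.1, p.1, p.2.1)

/-- For every `X = (a,b,c) ∈ P`, `G(X·A₀) = X` and `G(X·A₁) = X`; explicitly,
`G(b,c,a+c) = (a,b,c)` and `G(a,b,a+c) = (a,b,c)`. -/
theorem G_leftInverse (a b c : ℤ) (h : ((a, b, c) : ℤ × ℤ × ℤ) ∈ P) :
    G (b, c, a + c) = (a, b, c) ∧ G (a, b, a + c) = (a, b, c) := by
  rcases h with ⟨h1, h2, h3⟩ | h
  · dsimp only at h1 h2 h3
    constructor
    · simp only [G]
      rw [if_neg (by omega)]
      simp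
    · simp only [G]
      rw [if_pos (by omega)]
      simp
  · simp only [Set.mem_singleton_iff, Prod.mk.injEq] at h
    obtain ⟨rfl, rfl, rfl⟩ := h
    decide
end

section
/- No germ except (1,1,1) lies in the TRIP-Stern sequence for (e,e,e): if a and b are integers with 0 < a < b < 2a, then the triple (a,a,b) does not appear in the TRIP-Stern sequence for (e,e,e), i.e., there is no finite word v in {0,1} with Δ(v) = (a,a,b). -/
def TSInv (p : ℤ × ℤ × ℤ) : Prop :=
  0 < p.1 ∧ p.1 ≤ p.2.1 ∧ p.2.1 < p.2.2 ∧ (p.1 = p.2.1 → 2 * p.1 ≤ p.2.2)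

lemma inv_step (p : ℤ × ℤ × ℤ) (i : Bool) (h : TSInv p) : TSInv (step p i) := by
  obtain ⟨x, y, z⟩ := p
  obtain ⟨h1, h2, h3, h4⟩ := h
  simp only [TSInv, step, f0, f1] at *
  cases i <;> simp <;> omega

lemma inv_foldl (v : List Bool) (p : ℤ × ℤ × ℤ) (h : TSInv p) : TSInv (v.foldl step p) := by
  induction v generalizing p with
  | nil => exact h
  | cons i w ih => exact ih _ (inv_step p i h)

/-- No germ except `(1,1,1)` lies in the TRIP-Stern sequence for `(e,e,e)`: if
`0 < a < b < 2a` then the triple `(a,a,b)` does not appear, i.e. there is no finite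
word `v` in `{0,1}` with `Δ(v) = (a,a,b)`. -/
theorem germ_not_in_tripStern (a b : ℤ) (ha : 0 < a) (hab : a < b) (hb : b < 2 * a) :
    ∀ v : List Bool, delta v ≠ (a, a, b) := by
  intro v
  cases v with
  | nil =>
    simp only [delta, List.foldl]
    intro h
    rw [Prod.mk.injEq, Prod.mk.injEq] at h
    omega
  | cons i w =>
    intro h
    have hinv : TSInv (delta (i :: w)) := by
      have h0 : TSInv (step (1, 1, 1) i) := by
        unfold TSInv step f0 f1
        cases i <;> simp <;> omega
      simpa [delta, List.foldl] using inv_foldl w _ h0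
    rw [h] at hinv
    obtain ⟨h1, h2, h3, h4⟩ := hinv
    simp at h4
    omega
end
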